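/- For any integer m and the Voiculescu matrices, Ω_n^m S_n Ω_n^{-m} S_n^{-1} = ω_n^m · 1_n, and consequently ‖Ω_n^m S_n Ω_n^{-m} S_n^{-1} − 1_n‖ = |exp(2πim/n) − 1| → 0 as n → ∞, while the winding number of r ↦ det(r·Ω_n^m S_n Ω_n^{-m} S_n^{-1} + (1−r)·1_n) = (1 + r(ω_n^m − 1))^n equals m for n > 2|m|. -/

import Mathlib

open Complex Matrix Filter

/-- `ω_n = exp(2πi/n)`. -/
noncomputable def omg (n : ℕ) : ℂ := Complex.exp (2 * Real.pi * Complex.I / n)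

/-- The `n×n` cyclic shift matrix `S_n`, with `S_n e_k = e_{k+1}` (indices mod `n`). -/
def Vshift (n : ℕ) : Matrix (Fin n) (Fin n) ℂ :=
  Matrix.of fun i j => if (i : ℕ) = ((j : ℕ) + 1) % n then 1 else 0

/-- The diagonal matrix `Ω_n = diag(ω_n, ω_n^2, …, ω_n^n)`. -/
noncomputable def VOmega (n : ℕ) : Matrix (Fin n) (Fin n) ℂ :=
  Matrix.diagonal fun k => omg n ^ ((k : ℕ) + 1)

/-- `M ^ k` for an integer exponent `k`, negative powers via the matrix inverse. -/
noncomputable def zpowMat {n : ℕ} (M : Matrix (Fin n) (Fin n) ℂ) (k : ℤ) :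
    Matrix (Fin n) (Fin n) ℂ :=
  if 0 ≤ k then M ^ k.toNat else M⁻¹ ^ (-k).toNat

/-- The operator norm on `n×n` complex matrices. -/
noncomputable def opNorm {n : ℕ} (M : Matrix (Fin n) (Fin n) ℂ) : ℝ :=
  ‖Matrix.toEuclideanCLM (n := Fin n) (𝕜 := ℂ) M‖

section auxStmt9
set_option synthInstance.maxHeartbeats 1000000
set_option maxHeartbeats 1000000

lemma omg_ne_zero (n : ℕ) : omg n ≠ 0 := Complex.exp_ne_zero _
lemma vshift_apply (n : ℕ) [NeZero n] (i j : Fin n) :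
    Vshift n i j = if i = j + 1 then 1 else 0 := by
  have h : ((j + 1 : Fin n) : ℕ) = ((j : ℕ) + 1) % n := by
    simp [Fin.add_def, Nat.add_mod]
  simp only [Vshift, Matrix.of_apply, Fin.ext_iff, h]
lemma vshift_mul_transpose (n : ℕ) [NeZero n] :
    Vshift n * (Vshift n)ᵀ = 1 := by
  ext i j
  rw [Matrix.mul_apply]
  simp only [Matrix.transpose_apply, vshift_apply, Matrix.one_apply]
  rw [Finset.sum_eq_single (i - 1)]
  · simp only [sub_add_cancel, if_pos rfl, one_mul]
    by_cases h : i = j <;> simp [h, eq_comm]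
  · intro k _ hk
    rw [if_neg fun h => hk (by rw [h]; exact (add_sub_cancel_right k 1).symm), zero_mul]
  · intro h; exact absurd (Finset.mem_univ _) h
lemma vshift_inv (n : ℕ) [NeZero n] : (Vshift n)⁻¹ = (Vshift n)ᵀ :=
  Matrix.inv_eq_right_inv (vshift_mul_transpose n)
lemma zpowMat_diagonal {n : ℕ} (d : Fin n → ℂ) (hd : ∀ i, d i ≠ 0) (k : ℤ) :
    zpowMat (Matrix.diagonal d) k = Matrix.diagonal (fun i => d i ^ k) := by
  have hinv : (Matrix.diagonal d)⁻¹ = Matrix.diagonal (fun i => (d i)⁻¹) := by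
    apply Matrix.inv_eq_right_inv
    rw [Matrix.diagonal_mul_diagonal]
    convert Matrix.diagonal_one using 2
    funext i
    exact mul_inv_cancel₀ (hd i)
  unfold zpowMat
  split_ifs with h
  · rw [Matrix.diagonal_pow]
    have : d ^ k.toNat = fun i => d i ^ k := funext fun i => by
      rw [Pi.pow_apply, ← zpow_natCast, Int.toNat_of_nonneg h]
    rw [this]
  · rw [hinv, Matrix.diagonal_pow]
    have : (fun i => (d i)⁻¹) ^ (-k).toNat = fun i => d i ^ k := funext fun i => by
      rw [Pi.pow_apply, inv_pow, ← zpow_natCast,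
        Int.toNat_of_nonneg (by omega : (0:ℤ) ≤ -k), ← _root_.zpow_neg, neg_neg]
    rw [this]
lemma omg_pow_n {n : ℕ} (hn : 1 ≤ n) : omg n ^ (n : ℤ) = 1 := by
  rw [zpow_natCast, omg, ← Complex.exp_nat_mul]
  rw [mul_div_cancel₀ _ (Nat.cast_ne_zero.mpr (by omega))]
  exact Complex.exp_two_pi_mul_I
lemma omg_zpow_congr {n : ℕ} (hn : 1 ≤ n) {a b : ℤ} (h : (n : ℤ) ∣ a - b) :
    omg n ^ a = omg n ^ b := by
  obtain ⟨t, ht⟩ := h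
  have : a = b + n * t := by linarith
  rw [this, zpow_add₀ (omg_ne_zero n), _root_.zpow_mul, omg_pow_n hn, _root_.one_zpow, mul_one]
lemma zpowMat_VOmega {n : ℕ} (k : ℤ) :
    zpowMat (VOmega n) k = Matrix.diagonal (fun i : Fin n => omg n ^ ((((i : ℕ) : ℤ) + 1) * k)) := by
  rw [VOmega, zpowMat_diagonal _ (fun i => pow_ne_zero _ (omg_ne_zero n)) k]
  have : (fun i : Fin n => (omg n ^ ((i : ℕ) + 1)) ^ k) =
      fun i : Fin n => omg n ^ ((((i : ℕ) : ℤ) + 1) * k) := funext fun i => by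
    rw [← zpow_natCast (omg n) ((i : ℕ) + 1), ← _root_.zpow_mul]
    norm_num
  rw [this]
lemma key_identity (m : ℤ) {n : ℕ} (hn : 1 ≤ n) :
    zpowMat (VOmega n) m * Vshift n * zpowMat (VOmega n) (-m) * (Vshift n)⁻¹ =
      (omg n ^ m) • (1 : Matrix (Fin n) (Fin n) ℂ) := by
  haveI : NeZero n := ⟨by omega⟩
  have hmid : zpowMat (VOmega n) m * Vshift n * zpowMat (VOmega n) (-m) =
      (omg n ^ m) • Vshift n := by
    rw [zpowMat_VOmega, zpowMat_VOmega]
    ext i j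
    rw [Matrix.mul_diagonal, Matrix.diagonal_mul, Matrix.smul_apply, vshift_apply, smul_eq_mul]
    split_ifs with h
    · rw [mul_one, mul_one, ← zpow_add₀ (omg_ne_zero n)]
      have hdm := Nat.div_add_mod ((j:ℕ)+1) n
      have hval : (i:ℕ) = ((j:ℕ)+1) % n := by
        rw [h]; simp [Fin.add_def, Nat.add_mod]
      obtain ⟨q, hq⟩ : ∃ q : ℕ, (i:ℕ) + n * q = (j:ℕ) + 1 :=
        ⟨((j:ℕ)+1)/n, by omega⟩
      refine omg_zpow_congr hn ⟨-m * (q : ℤ), ?_⟩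
      have hz := congrArg (Nat.cast : ℕ → ℤ) hq
      push_cast at hz
      linear_combination m * hz
    · simp
  rw [hmid, vshift_inv, Matrix.smul_mul, vshift_mul_transpose]

lemma omg_zpow (m : ℤ) (n : ℕ) :
    omg n ^ m = Complex.exp (2 * Real.pi * Complex.I * m / n) := by
  rw [omg, ← Complex.exp_int_mul]
  ring_nf
lemma norm_part (m : ℤ) {n : ℕ} (hn : 1 ≤ n) :
    opNorm (zpowMat (VOmega n) m * Vshift n * zpowMat (VOmega n) (-m) * (Vshift n)⁻¹ - 1) =
      ‖Complex.exp (2 * Real.pi * Complex.I * m / n) - 1‖ := by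
  rw [key_identity m hn]
  have h1 : (omg n ^ m) • (1 : Matrix (Fin n) (Fin n) ℂ) - 1 =
      (omg n ^ m - 1) • (1 : Matrix (Fin n) (Fin n) ℂ) := by
    rw [sub_smul, one_smul]
  rw [h1, opNorm, _root_.map_smul, _root_.map_one]
  haveI : Nonempty (Fin n) := ⟨⟨0, by omega⟩⟩
  haveI : Nontrivial (EuclideanSpace ℂ (Fin n)) := inferInstance
  rw [norm_smul (omg n ^ m - 1)
      (1 : EuclideanSpace ℂ (Fin n) →L[ℂ] EuclideanSpace ℂ (Fin n)),
    ContinuousLinearMap.one_def, ContinuousLinearMap.norm_id, mul_one,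
    omg_zpow]
lemma tendsto_part (m : ℤ) :
    Filter.Tendsto (fun n : ℕ =>
        opNorm (zpowMat (VOmega n) m * Vshift n * zpowMat (VOmega n) (-m) * (Vshift n)⁻¹ - 1))
      Filter.atTop (nhds 0) := by
  have h1 : Filter.Tendsto (fun n : ℕ => (2 * Real.pi * Complex.I * m / n : ℂ))
      Filter.atTop (nhds 0) := by
    have h0 : Filter.Tendsto (fun n : ℕ => ((1 / (n:ℝ) : ℝ) : ℂ)) Filter.atTop (nhds 0) := by
      have : Filter.Tendsto (fun n : ℕ => 1 / (n:ℝ)) Filter.atTop (nhds 0) := tendsto_one_div_atTop_nhds_zero_nat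
      have hc := Complex.continuous_ofReal.continuousAt (x := (0:ℝ))
      have h := hc.tendsto.comp this
      simp only [Complex.ofReal_zero] at h
      exact h.congr fun n => rfl
    have := h0.const_mul (2 * Real.pi * Complex.I * m : ℂ)
    simp only [mul_zero] at this
    refine this.congr fun n => ?_
    push_cast
    ring
  have h2 : Filter.Tendsto (fun z : ℂ => ‖Complex.exp z - 1‖) (nhds 0) (nhds 0) := by
    have hc : Continuous fun z : ℂ => ‖Complex.exp z - 1‖ := by
      exact (Complex.continuous_exp.sub continuous_const).norm
    have h := hc.continuousAt (x := (0:ℂ))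
    unfold ContinuousAt at h
    simpa using h
  refine Filter.Tendsto.congr' ?_ (h2.comp h1)
  filter_upwards [Filter.eventually_ge_atTop 1] with n hn
  exact (norm_part m hn).symm
lemma winding_part (m : ℤ) {n : ℕ} (hn : 2 * m.natAbs < n) (L : ℝ → ℂ)
    (hL : ContinuousOn L (Set.Icc 0 1))
    (hexp : ∀ r ∈ Set.Icc (0 : ℝ) 1,
      Complex.exp (L r) = (1 + (r : ℂ) * (omg n ^ m - 1)) ^ n) :
    L 1 - L 0 = 2 * Real.pi * Complex.I * m := by
  have hn1 : 1 ≤ n := by omega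
  have hnR : (0:ℝ) < n := by exact_mod_cast hn1
  set θ : ℝ := 2 * Real.pi * m / n with hθdef
  have hπ := Real.pi_pos
  have hθabs : |θ| < Real.pi := by
    rw [hθdef, abs_div, abs_of_pos hnR, div_lt_iff₀ hnR]
    have : |(m:ℝ)| = (m.natAbs : ℝ) := by
      rw [← Int.cast_abs, Int.abs_eq_natAbs, Int.cast_natCast]
    rw [abs_mul, this, abs_of_pos (by positivity : (0:ℝ) < 2 * Real.pi)]
    have h2 : (2 * m.natAbs : ℝ) < n := by exact_mod_cast hn
    nlinarith
  have hζ : omg n ^ m = Complex.exp (θ * Complex.I) := by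
    rw [omg_zpow]
    congr 1
    rw [hθdef]
    push_cast
    ring
  set ζ : ℂ := omg n ^ m with hζdef
  set z : ℝ → ℂ := fun r => 1 + (r:ℂ) * (ζ - 1) with hzdef
  have hz_mem : ∀ r ∈ Set.Icc (0:ℝ) 1, z r ∈ Complex.slitPlane := by
    intro r hr
    by_cases hζ1 : ζ = 1
    · have : z r = 1 := by simp [hzdef, hζ1]
      rw [this]
      exact Complex.mem_slitPlane_iff.mpr (Or.inl (by norm_num))
    · have hθ0 : θ ≠ 0 := by
        intro h
        exact hζ1 (by rw [hζ, h]; simp)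
      have hsin : Real.sin θ ≠ 0 := by
        intro h
        obtain ⟨k, hk⟩ := Real.sin_eq_zero_iff.mp h
        have : k = 0 := by
          by_contra hk0
          have : (1:ℝ) ≤ |(k:ℝ)| := by
            exact_mod_cast Int.one_le_abs (by exact_mod_cast hk0)
          rw [← hk, abs_mul, abs_of_pos hπ] at hθabs
          nlinarith
        rw [this] at hk
        simp at hk
        exact hθ0 hk.symm
      rcases eq_or_lt_of_le hr.1 with h0 | h0
      · have : z r = 1 := by simp [hzdef, ← h0]
        rw [this]
        exact Complex.mem_slitPlane_iff.mpr (Or.inl (by norm_num))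
      · refine Complex.mem_slitPlane_iff.mpr (Or.inr ?_)
        have him : (z r).im = r * Real.sin θ := by
          simp [hzdef, hζ, Complex.exp_ofReal_mul_I_im]
        rw [him]
        exact mul_ne_zero (ne_of_gt h0) hsin
  have hz_ne : ∀ r ∈ Set.Icc (0:ℝ) 1, z r ≠ 0 :=
    fun r hr => Complex.slitPlane_ne_zero (hz_mem r hr)
  set l : ℝ → ℂ := fun r => n * Complex.log (z r) with hldef
  have hz_cont : Continuous z := by
    apply continuous_const.add
    exact (Complex.continuous_ofReal).mul continuous_const
  have hl_cont : ContinuousOn l (Set.Icc 0 1) :=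
    continuousOn_const.mul (hz_cont.continuousOn.clog hz_mem)
  have hexpl : ∀ r ∈ Set.Icc (0:ℝ) 1, Complex.exp (l r) = (z r) ^ n := by
    intro r hr
    rw [hldef]
    simp only
    rw [Complex.exp_nat_mul, Complex.exp_log (hz_ne r hr)]
  -- the difference g = L - l takes values in 2πiℤ
  set g : ℝ → ℂ := fun r => L r - l r with hgdef
  have hg_cont : ContinuousOn g (Set.Icc 0 1) := hL.sub hl_cont
  have hgval : ∀ r ∈ Set.Icc (0:ℝ) 1, ∃ k : ℤ, g r = k * (2 * Real.pi * Complex.I) := by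
    intro r hr
    apply Complex.exp_eq_one_iff.mp
    rw [hgdef]
    simp only
    rw [Complex.exp_sub, hexp r hr, hexpl r hr]
    have hzz : (1 + (r:ℂ) * (ζ - 1)) = z r := rfl
    rw [hzz, div_self (pow_ne_zero n (hz_ne r hr))]
  set φ : ℝ → ℝ := fun r => (g r).im with hφdef
  have hφ_cont : ContinuousOn φ (Set.Icc 0 1) := Complex.continuous_im.comp_continuousOn hg_cont
  have hφval : ∀ r ∈ Set.Icc (0:ℝ) 1, ∃ k : ℤ, φ r = 2 * Real.pi * k := by
    intro r hr
    obtain ⟨k, hk⟩ := hgval r hr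
    refine ⟨k, ?_⟩
    show (g r).im = 2 * Real.pi * k
    rw [hk]
    simp
    ring
  have hgim : ∀ r ∈ Set.Icc (0:ℝ) 1, g r = (φ r : ℝ) * Complex.I := by
    intro r hr
    obtain ⟨k, hk⟩ := hgval r hr
    have hre : (g r).re = 0 := by rw [hk]; simp
    conv_lhs => rw [← Complex.re_add_im (g r)]
    rw [hre]
    simp
    rfl
  have h01 : (0:ℝ) ∈ Set.Icc (0:ℝ) 1 := by norm_num
  have h11 : (1:ℝ) ∈ Set.Icc (0:ℝ) 1 := by norm_num
  -- φ 1 = φ 0 by the intermediate value theorem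
  have hφeq : φ 1 = φ 0 := by
    obtain ⟨k0, hk0⟩ := hφval 0 h01
    obtain ⟨k1, hk1⟩ := hφval 1 h11
    have hcontr : ∀ c ∈ Set.Icc (0:ℝ) 1, ∀ j : ℤ, φ c ≠ 2 * Real.pi * j + Real.pi := by
      intro c hc j hcc
      obtain ⟨kc, hkc⟩ := hφval c hc
      rw [hkc] at hcc
      have h2 : (2 * (kc:ℝ)) * Real.pi = (2 * (j:ℝ) + 1) * Real.pi := by linarith
      have h3 : (2 * (kc:ℝ)) = 2 * j + 1 := mul_right_cancel₀ (ne_of_gt hπ) h2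
      have h4 : (2 * kc : ℤ) = 2 * j + 1 := by exact_mod_cast h3
      omega
    rcases lt_trichotomy (φ 0) (φ 1) with hlt | heq | hgt
    · exfalso
      have hge : φ 0 + 2 * Real.pi ≤ φ 1 := by
        rw [hk0, hk1]
        rw [hk0, hk1] at hlt
        have hk01 : (k0:ℝ) < k1 :=
          (mul_lt_mul_iff_right₀ (by positivity : (0:ℝ) < 2 * Real.pi)).mp hlt
        have : k0 < k1 := by exact_mod_cast hk01
        have : (k0:ℝ) + 1 ≤ k1 := by exact_mod_cast this
        nlinarith
      obtain ⟨c, hc, hφc⟩ := intermediate_value_Icc (by norm_num : (0:ℝ) ≤ 1) hφ_cont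
        (Set.mem_Icc.mpr ⟨by linarith, by linarith⟩ : φ 0 + Real.pi ∈ Set.Icc (φ 0) (φ 1))
      exact hcontr c hc k0 (by rw [hφc, hk0])
    · exact heq.symm
    · exfalso
      have hge : φ 1 ≤ φ 0 - Real.pi := by
        rw [hk0, hk1]
        rw [hk0, hk1] at hgt
        have hk01 : (k1:ℝ) < k0 :=
          (mul_lt_mul_iff_right₀ (by positivity : (0:ℝ) < 2 * Real.pi)).mp hgt
        have : k1 < k0 := by exact_mod_cast hk01
        have : (k1:ℝ) + 1 ≤ k0 := by exact_mod_cast this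
        nlinarith
      obtain ⟨c, hc, hφc⟩ := intermediate_value_Icc' (by norm_num : (0:ℝ) ≤ 1) hφ_cont
        (Set.mem_Icc.mpr ⟨by linarith, by linarith⟩ : φ 0 - Real.pi ∈ Set.Icc (φ 1) (φ 0))
      refine hcontr c hc (k0 - 1) ?_
      rw [hφc, hk0]
      push_cast
      ring
  -- conclude
  have hL10 : L 1 - L 0 = l 1 - l 0 := by
    have e1 : L 1 = g 1 + l 1 := by rw [hgdef]; ring
    have e0 : L 0 = g 0 + l 0 := by rw [hgdef]; ring
    rw [e1, e0, hgim 1 h11, hgim 0 h01, hφeq]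
    ring
  have hz1 : z 1 = ζ := by simp [hzdef]
  have hz0 : z 0 = 1 := by simp [hzdef]
  have hlogζ : Complex.log ζ = θ * Complex.I := by
    rw [hζ, Complex.log_exp]
    · simpa using neg_lt_of_abs_lt hθabs
    · simpa using le_of_lt (lt_of_abs_lt hθabs)
  rw [hL10, hldef]
  simp only [hz1, hz0, Complex.log_one, mul_zero, sub_zero, hlogζ]
  have hnC : ((n:ℕ):ℂ) ≠ 0 := Nat.cast_ne_zero.mpr (by omega)
  rw [hθdef]
  push_cast
  field_simp

end auxStmt9

set_option synthInstance.maxHeartbeats 1000000 in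
set_option maxHeartbeats 1000000 in
/-- For any integer `m`: `Ω_n^m S_n Ω_n^{−m} S_n^{−1} = ω_n^m • 1`; consequently
`‖Ω_n^m S_n Ω_n^{−m} S_n^{−1} − 1‖ = |exp(2πim/n) − 1| → 0` as `n → ∞`; and for
`n > 2|m|` the determinant curve `γ(r) = (1 + r(ω_n^m − 1))^n` has winding number `m`
about the origin (any continuous logarithm `L` satisfies `L 1 − L 0 = 2πi·m`). -/
theorem stmt9 (m : ℤ) :
    (∀ n : ℕ, 1 ≤ n →
      zpowMat (VOmega n) m * Vshift n * zpowMat (VOmega n) (-m) * (Vshift n)⁻¹ =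
        (omg n ^ m) • (1 : Matrix (Fin n) (Fin n) ℂ)) ∧
    (∀ n : ℕ, 1 ≤ n →
      opNorm (zpowMat (VOmega n) m * Vshift n * zpowMat (VOmega n) (-m) * (Vshift n)⁻¹ - 1) =
        ‖Complex.exp (2 * Real.pi * Complex.I * m / n) - 1‖) ∧
    Filter.Tendsto (fun n : ℕ =>
        opNorm (zpowMat (VOmega n) m * Vshift n * zpowMat (VOmega n) (-m) * (Vshift n)⁻¹ - 1))
      Filter.atTop (nhds 0) ∧
    (∀ n : ℕ, 2 * m.natAbs < n → ∀ L : ℝ → ℂ, ContinuousOn L (Set.Icc 0 1) →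
      (∀ r ∈ Set.Icc (0 : ℝ) 1,
        Complex.exp (L r) = (1 + (r : ℂ) * (omg n ^ m - 1)) ^ n) →
      L 1 - L 0 = 2 * Real.pi * Complex.I * m) := by
  
  refine ⟨fun n hn => key_identity m hn, fun n hn => norm_part m hn, tendsto_part m,
    fun n hn L hL hexp => winding_part m hn L hL hexp⟩
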